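/- For all indices i, j in {0,1,...,r}, the first-order differential operators satisfy the commutation relation D_j(m, l + 1_i, k+1) ∘ D_i(m, l, k) = D_i(m, l + 1_j, k+1) ∘ D_j(m, l, k), where for each index i the operator is D_i(m,l,k) = x(x-1)·d/dx − (k + m_1 + ... + m_i − l_i + l_{i+1} + i)(x−1) − k − 1, acting on polynomials in x. -/

import Mathlib

open Polynomial Finset

theorem stmt0 (r : ℕ) (m l : ℕ → ℝ) (k : ℝ) (i j : ℕ) (hi : i ≤ r) (hj : j ≤ r)
    (p : Polynomial ℝ) :
    let one : ℕ → ℕ → ℝ := fun a s => if 1 ≤ s ∧ s ≤ a then 1 else 0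
    let ext : (ℕ → ℝ) → ℝ → ℕ → ℝ := fun l' k' s =>
      if s = 0 then k' else if s = r + 1 then 0 else l' s
    let coef : (ℕ → ℝ) → ℝ → ℕ → ℝ := fun l' k' a =>
      k' + (∑ s ∈ Finset.Icc 1 a, m s) - ext l' k' a + ext l' k' (a + 1) + (a : ℝ)
    let D : (ℕ → ℝ) → ℝ → ℕ → Polynomial ℝ → Polynomial ℝ := fun l' k' a q =>
      X * (X - 1) * derivative q - (C (coef l' k' a) * (X - 1) + C (k' + 1)) * q
    D (fun s => l s + one i s) (k + 1) j (D l k i p)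
      = D (fun s => l s + one j s) (k + 1) i (D l k j p) := by
  intro one ext coef D
  set t : ℝ := if i = j then 0 else 1 with ht
  have ha : coef (fun s => l s + one j s) (k + 1) i = coef l k i + t := by
    simp only [coef, ext, one, ht]
    split_ifs <;> first | ring1 | (exfalso; omega) | exact (‹False›).elim
  have hb : coef (fun s => l s + one i s) (k + 1) j = coef l k j + t := by
    simp only [coef, ext, one, ht]
    split_ifs <;> first | ring1 | (exfalso; omega) | exact (‹False›).elim
  have h2 : (t - 1) * (coef l k i - coef l k j) = 0 := by
    rcases eq_or_ne i j with h | h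
    · subst h; simp
    · simp [ht, h]
  have h2C : (C t - 1) * (C (coef l k i) - C (coef l k j)) = (0 : Polynomial ℝ) := by
    rw [← C_1, ← C_sub, ← C_sub, ← C_mul, h2, C_0]
  simp only [D, ha, hb, C_add, derivative_sub, derivative_mul, derivative_add,
    derivative_X, derivative_one, derivative_C, C_1, mul_one, one_mul, sub_zero, zero_mul,
    add_zero, zero_add, mul_zero]
  linear_combination ((X : Polynomial ℝ) - 1) ^ 2 * p * h2C
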